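/- With $\lambda_1 > \lambda_2$ and $\theta_0 \in (0,\pi/2)$ fixed, the $2\times 2$ Toda deflation time satisfies the asymptotic formula $(\lambda_1-\lambda_2)\tau_\epsilon + \log\epsilon \to \log\tan\theta_0 + \log(\lambda_1-\lambda_2)$ as $\epsilon \to 0^+$. -/

import Mathlib

open Real Filter

/-- Asymptotics of the 2×2 Toda deflation time:
`(λ₁-λ₂)τ_ε + log ε → log tan θ₀ + log(λ₁-λ₂)` as `ε → 0⁺`. -/
theorem toda_2x2_deflation_time_asymptotics
    (lam₁ lam₂ θ₀ : ℝ) (hlam : lam₂ < lam₁)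
    (hθ₀ : θ₀ ∈ Set.Ioo 0 (π / 2))
    (τ : ℝ → ℝ)
    (hτ : ∃ ε₁ > 0, ∀ ε ∈ Set.Ioo (0 : ℝ) ε₁,
      (lam₁ - lam₂) * τ ε =
        Real.log (Real.tan θ₀) -
          Real.log ((lam₁ - lam₂) / (2 * ε) -
            Real.sqrt ((lam₁ - lam₂) ^ 2 / (4 * ε ^ 2) - 1))) :
    Tendsto (fun ε : ℝ => (lam₁ - lam₂) * τ ε + Real.log ε)
      (nhdsWithin 0 (Set.Ioi 0))
      (nhds (Real.log (Real.tan θ₀) + Real.log (lam₁ - lam₂))) := by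
  obtain ⟨ε₁, hε₁, heq⟩ := hτ
  set d := lam₁ - lam₂ with hd
  have hd0 : 0 < d := by simp only [hd]; linarith
  -- the comparison function
  have key : ∀ ε ∈ Set.Ioo (0 : ℝ) (min ε₁ (d / 2)),
      d * τ ε + Real.log ε =
        Real.log (Real.tan θ₀) + Real.log (d / 2 + Real.sqrt (d ^ 2 / 4 - ε ^ 2)) := by
    rintro ε ⟨hε0, hεlt⟩
    have h1 : ε < ε₁ := lt_of_lt_of_le hεlt (min_le_left _ _)
    have h2 : ε < d / 2 := lt_of_lt_of_le hεlt (min_le_right _ _)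
    have hA : (0 : ℝ) ≤ d ^ 2 / 4 - ε ^ 2 := by nlinarith
    set s := Real.sqrt (d ^ 2 / 4 - ε ^ 2) with hs
    have hs2 : s ^ 2 = d ^ 2 / 4 - ε ^ 2 := Real.sq_sqrt hA
    have hsnn : 0 ≤ s := Real.sqrt_nonneg _
    have hslt : s < d / 2 := by nlinarith
    have hB : 0 < d / 2 + s := by linarith
    have hεne : ε ≠ 0 := ne_of_gt hε0
    have hsqrt : Real.sqrt (d ^ 2 / (4 * ε ^ 2) - 1) = s / ε := by
      have h3 : d ^ 2 / (4 * ε ^ 2) - 1 = (d ^ 2 / 4 - ε ^ 2) / ε ^ 2 := by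
        field_simp
      rw [h3, Real.sqrt_div hA, Real.sqrt_sq hε0.le]
    have hval : d / (2 * ε) - Real.sqrt (d ^ 2 / (4 * ε ^ 2) - 1) = ε / (d / 2 + s) := by
      rw [hsqrt]
      have hmul : (d / 2 - s) * (d / 2 + s) = ε ^ 2 := by nlinarith
      field_simp
      linear_combination (-4) * hs2
    have := heq ε ⟨hε0, h1⟩
    rw [hval] at this
    rw [this, Real.log_div hεne (ne_of_gt hB)]
    ring
  have hlim : Tendsto (fun ε : ℝ =>
      Real.log (Real.tan θ₀) + Real.log (d / 2 + Real.sqrt (d ^ 2 / 4 - ε ^ 2)))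
      (nhdsWithin 0 (Set.Ioi 0))
      (nhds (Real.log (Real.tan θ₀) + Real.log d)) := by
    have hsq : Real.sqrt (d ^ 2 / 4 - (0 : ℝ) ^ 2) = d / 2 := by
      rw [show d ^ 2 / 4 - (0 : ℝ) ^ 2 = (d / 2) ^ 2 by ring, Real.sqrt_sq (by linarith)]
    have hc : ContinuousAt (fun ε : ℝ =>
        Real.log (Real.tan θ₀) + Real.log (d / 2 + Real.sqrt (d ^ 2 / 4 - ε ^ 2))) 0 := by
      apply ContinuousAt.add continuousAt_const
      apply ContinuousAt.comp (Real.continuousAt_log ?_)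
      · exact ContinuousAt.add continuousAt_const
          ((Real.continuous_sqrt.continuousAt).comp (by fun_prop))
      · simp only [hsq]
        linarith
    have := hc.tendsto.mono_left (nhdsWithin_le_nhds (s := Set.Ioi (0:ℝ)))
    simpa only [hsq, show d / 2 + d / 2 = d by ring] using this
  refine hlim.congr' ?_
  have hmem : Set.Ioo (0 : ℝ) (min ε₁ (d / 2)) ∈ nhdsWithin (0 : ℝ) (Set.Ioi 0) :=
    Ioo_mem_nhdsGT_of_mem ⟨le_refl _, lt_min hε₁ (by linarith)⟩
  filter_upwards [hmem] with ε hε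
  exact (key ε hε).symm
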